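/- arXiv:1411.0948 — 2 statements merged into one kernel-verified Lean document; each statement's English description precedes it below -/
import Mathlib

section
/- For all real t with 0 ≤ t ≤ 4, we have 2e^{-t/4} - e^{-t/2} ≤ e^{-t²/64}. -/
theorem exp_ineq_on_interval :
    ∀ t : ℝ, 0 ≤ t → t ≤ 4 →
      2 * Real.exp (-t / 4) - Real.exp (-t / 2) ≤ Real.exp (-t ^ 2 / 64) := by
  intro t ht ht4
  have ha : t / 4 + 1 ≤ Real.exp (t / 4) := Real.add_one_le_exp _
  have hb : Real.exp (t / 4) * Real.exp (-t / 4) = 1 := by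
    rw [← Real.exp_add]; ring_nf; exact Real.exp_zero
  have hc : -t ^ 2 / 64 + 1 ≤ Real.exp (-t ^ 2 / 64) := Real.add_one_le_exp _
  have hd : Real.exp (-t / 2) = Real.exp (-t / 4) * Real.exp (-t / 4) := by
    rw [← Real.exp_add]; ring_nf
  have he : (0:ℝ) < Real.exp (-t / 4) := Real.exp_pos _
  nlinarith [sq_nonneg (1 - Real.exp (-t / 4) - t / 8), sq_nonneg (t / 8),
    mul_pos he he, mul_nonneg ht he.le, mul_nonneg (mul_nonneg ht ht) he.le]
end

section
/- Let Z₁, ..., Z_k be i.i.d. random variables, each distributed as the sum of two independent exponential random variables of rate 1/2, and let Z = min{Z₁,...,Z_k}. Then E[Z] ≤ 8√(π/k) + 2^{k+2}/(k e^k). In particular, E[Z] = O(1/√k). -/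
open MeasureTheory ProbabilityTheory Real Set

section Aux
lemma aux_exp_half (x : ℝ) (h0 : 0 ≤ x) (h1 : x ≤ 1) : Real.exp (-x) ≤ 1 - x/2 := by
  have h := Real.add_one_le_exp x
  have hp : (0:ℝ) < Real.exp x := Real.exp_pos x
  rw [Real.exp_neg, inv_eq_one_div, div_le_iff₀ hp]
  nlinarith

lemma aux_exp_tail (c a : ℝ) (hc : 0 < c) :
    ∫ x in Set.Ioi a, Real.exp (-(c*x)) = Real.exp (-(c*a)) / c := by
  have hderiv : ∀ x ∈ Set.Ici a, HasDerivAt (fun x => -(Real.exp (-(c*x))/c)) (Real.exp (-(c*x))) x := by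
    intro x _
    have h1 : HasDerivAt (fun x : ℝ => -(c*x)) (-c) x := by
      simpa using ((hasDerivAt_id x).const_mul c).fun_neg
    have h2 := (h1.exp.div_const c).fun_neg
    refine h2.congr_deriv ?_
    rw [mul_neg, neg_div, neg_neg, mul_div_assoc, div_self hc.ne', mul_one]
  have hint : IntegrableOn (fun x => Real.exp (-(c*x))) (Set.Ioi a) := by
    have := exp_neg_integrableOn_Ioi a hc
    simpa [neg_mul] using this
  have htend : Filter.Tendsto (fun x => -(Real.exp (-(c*x))/c)) Filter.atTop (nhds 0) := by
    have h1 : Filter.Tendsto (fun x : ℝ => c * x) Filter.atTop Filter.atTop :=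
      Filter.Tendsto.const_mul_atTop hc Filter.tendsto_id
    have h2 : Filter.Tendsto (fun x : ℝ => Real.exp (-(c*x))) Filter.atTop (nhds 0) :=
      Real.tendsto_exp_neg_atTop_nhds_zero.comp h1
    simpa using (h2.div_const c).neg
  have := integral_Ioi_of_hasDerivAt_of_tendsto' hderiv hint htend
  rw [this]; ring

lemma aux_meas_inf' {Ω : Type*} [MeasurableSpace Ω] {ι : Type*} {s : Finset ι} (hs : s.Nonempty)
    (g : ι → Ω → ℝ) (hg : ∀ i, Measurable (g i)) :
    Measurable fun ω => s.inf' hs (fun i => g i ω) := by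
  induction hs using Finset.Nonempty.cons_induction with
  | singleton a => simpa using hg a
  | cons a s ha hne ih =>
    rw [show (fun ω => (Finset.cons a s ha).inf' (Finset.cons_nonempty ha) fun i => g i ω)
      = fun ω => g a ω ⊓ s.inf' hne fun i => g i ω from funext fun ω => Finset.inf'_cons ..]
    exact (hg a).inf ih

lemma aux_prod {Ω : Type*} [MeasurableSpace Ω] (μ : Measure Ω) [IsProbabilityMeasure μ] (k : ℕ)
    (W : Fin k × Fin 2 → Ω → ℝ) (hmeas : ∀ i, Measurable (W i))
    (hindep : iIndepFun W μ) (t : ℝ) (s : Finset (Fin k)) :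
    μ (⋂ i ∈ s, ({ω | W (i,0) ω ≤ t} ∩ {ω | W (i,1) ω ≤ t})ᶜ)
      = ∏ i ∈ s, μ (({ω | W (i,0) ω ≤ t} ∩ {ω | W (i,1) ω ≤ t})ᶜ) := by
  classical
  set m : Fin k × Fin 2 → MeasurableSpace Ω :=
    fun p => MeasurableSpace.comap (W p) inferInstance with hm
  have h_le : ∀ p, m p ≤ _ := fun p => (hmeas p).comap_le
  have h_indep : iIndep m μ := hindep.iIndep
  have hCmem : ∀ (i : Fin k) (j : Fin 2), MeasurableSet[m (i,j)] {ω | W (i,j) ω ≤ t} :=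
    fun i j => ⟨Iic t, measurableSet_Iic, rfl⟩
  induction s using Finset.induction with
  | empty => simp
  | @insert a s ha ih =>
    have hd : Disjoint {p : Fin k × Fin 2 | p.1 = a} {p : Fin k × Fin 2 | p.1 ∈ s} := by
      rw [Set.disjoint_left]
      rintro ⟨i, j⟩ (rfl : i = a) (h : _ ∈ s)
      exact ha h
    have hInd := indep_iSup_of_disjoint h_le h_indep hd
    have hS : MeasurableSet[⨆ p ∈ {p : Fin k × Fin 2 | p.1 = a}, m p]
        (({ω | W (a,0) ω ≤ t} ∩ {ω | W (a,1) ω ≤ t})ᶜ) := by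
      have h0 := le_iSup₂ (f := fun (p : Fin k × Fin 2) (_ : p ∈ {p : Fin k × Fin 2 | p.1 = a}) => m p) (a,0) rfl
      have h1 := le_iSup₂ (f := fun (p : Fin k × Fin 2) (_ : p ∈ {p : Fin k × Fin 2 | p.1 = a}) => m p) (a,1) rfl
      exact ((h0 _ (hCmem a 0)).inter (h1 _ (hCmem a 1))).compl
    have hT : MeasurableSet[⨆ p ∈ {p : Fin k × Fin 2 | p.1 ∈ s}, m p]
        (⋂ i ∈ s, ({ω | W (i,0) ω ≤ t} ∩ {ω | W (i,1) ω ≤ t})ᶜ) := by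
      refine MeasurableSet.biInter s.countable_toSet (fun i hi => ?_)
      have h0 := le_iSup₂ (f := fun (p : Fin k × Fin 2) (_ : p ∈ {p : Fin k × Fin 2 | p.1 ∈ s}) => m p) (i,0) hi
      have h1 := le_iSup₂ (f := fun (p : Fin k × Fin 2) (_ : p ∈ {p : Fin k × Fin 2 | p.1 ∈ s}) => m p) (i,1) hi
      exact ((h0 _ (hCmem i 0)).inter (h1 _ (hCmem i 1))).compl
    have key := (hInd.indepSet_of_measurableSet hS hT).measure_inter_eq_mul
    rw [Finset.set_biInter_insert, Finset.prod_insert ha, key, ih]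
end Aux

theorem min_of_iid_sums_of_two_exponentials {Ω : Type*} [MeasurableSpace Ω] (μ : Measure Ω)
    [IsProbabilityMeasure μ] (k : ℕ) (hk : 0 < k)
    (W : Fin k × Fin 2 → Ω → ℝ) (hmeas : ∀ i, Measurable (W i))
    (hindep : iIndepFun W μ)
    (htail : ∀ i, ∀ t : ℝ, 0 ≤ t → μ {ω | t < W i ω} = ENNReal.ofReal (Real.exp (-t / 2))) :
    ∫⁻ ω, ENNReal.ofReal
        (Finset.univ.inf' ⟨⟨0, hk⟩, Finset.mem_univ _⟩
          (fun i : Fin k => W (i, 0) ω + W (i, 1) ω)) ∂μ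
      ≤ ENNReal.ofReal (8 * Real.sqrt (Real.pi / k) + 2 ^ (k + 2) / (k * Real.exp k)) := by
  have hkR : (0:ℝ) < k := Nat.cast_pos.2 hk
  set f : Ω → ℝ := fun ω => Finset.univ.inf' ⟨⟨0, hk⟩, Finset.mem_univ _⟩
      (fun i : Fin k => W (i, 0) ω + W (i, 1) ω) with hf
  -- basic tail facts
  have hW_le : ∀ p (a : ℝ), 0 ≤ a → μ {ω | W p ω ≤ a} = ENNReal.ofReal (1 - Real.exp (-a/2)) := by
    intro p a ha
    have hms : MeasurableSet {ω | a < W p ω} := measurableSet_lt measurable_const (hmeas p)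
    have hc : {ω | W p ω ≤ a} = {ω | a < W p ω}ᶜ := by ext ω; simp [not_lt]
    rw [hc, measure_compl hms (measure_ne_top μ _), htail p a ha, measure_univ,
      ← ENNReal.ofReal_one, ← ENNReal.ofReal_sub _ (Real.exp_nonneg _)]
  -- a.e. positivity
  have hpos : ∀ᵐ ω ∂μ, ∀ p, 0 < W p ω := by
    rw [ae_all_iff]
    intro p
    rw [ae_iff]
    have hms : MeasurableSet {ω | 0 < W p ω} := measurableSet_lt measurable_const (hmeas p)
    have h1 : μ {ω | 0 < W p ω} = 1 := by
      rw [htail p 0 le_rfl]; norm_num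
    have : {a | ¬ 0 < W p a} = {ω | 0 < W p ω}ᶜ := rfl
    rw [this, measure_compl hms (measure_ne_top μ _), h1, measure_univ, tsub_self]
  have hnn : 0 ≤ᵐ[μ] f := by
    filter_upwards [hpos] with ω hω
    exact Finset.le_inf' _ _ fun i _ => (add_pos (hω (i,0)) (hω (i,1))).le
  have hfm : Measurable f := aux_meas_inf' _ _ (fun i => (hmeas (i,0)).add (hmeas (i,1)))
  -- tail bound for the min
  have hq1 : ∀ t : ℝ, 0 ≤ t → Real.exp (-t/4) ≤ 1 := fun t ht =>
    Real.exp_le_one_iff.2 (by linarith)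
  have hbase_nn : ∀ t : ℝ, 0 ≤ t → 0 ≤ 1 - (1 - Real.exp (-t/4))^2 := by
    intro t ht
    have h1 := hq1 t ht
    have h2 := Real.exp_nonneg (-t/4)
    nlinarith
  have hmin_tail : ∀ t : ℝ, 0 ≤ t →
      μ {ω | t < f ω} ≤ ENNReal.ofReal ((1 - (1 - Real.exp (-t/4))^2)^k) := by
    intro t ht
    have hsub : {ω | t < f ω} ⊆
        ⋂ i ∈ (Finset.univ : Finset (Fin k)),
          ({ω | W (i,0) ω ≤ t/2} ∩ {ω | W (i,1) ω ≤ t/2})ᶜ := by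
      intro ω hω
      simp only [Set.mem_iInter, Set.mem_compl_iff, Set.mem_inter_iff, Set.mem_setOf_eq]
      intro i _
      rintro ⟨h0, h1⟩
      have hle : f ω ≤ W (i,0) ω + W (i,1) ω := Finset.inf'_le _ (Finset.mem_univ i)
      have : t < f ω := hω
      linarith
    have hCval : ∀ i : Fin k,
        μ (({ω | W (i,0) ω ≤ t/2} ∩ {ω | W (i,1) ω ≤ t/2})ᶜ)
          = ENNReal.ofReal (1 - (1 - Real.exp (-t/4))^2) := by
      intro i
      have hne : ((i, (0 : Fin 2)) : Fin k × Fin 2) ≠ (i, 1) := by simp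
      have hIF := hindep.indepFun hne
      have hprod := hIF.measure_inter_preimage_eq_mul (Set.Iic (t/2)) (Set.Iic (t/2))
        measurableSet_Iic measurableSet_Iic
      have hA : ∀ j : Fin 2, W (i,j) ⁻¹' Set.Iic (t/2) = {ω | W (i,j) ω ≤ t/2} := fun j => rfl
      have hval : μ ({ω | W (i,0) ω ≤ t/2} ∩ {ω | W (i,1) ω ≤ t/2})
          = ENNReal.ofReal ((1 - Real.exp (-t/4))^2) := by
        rw [← hA 0, ← hA 1, hprod, hA 0, hA 1, hW_le _ _ (by linarith), hW_le _ _ (by linarith)]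
        have heq : -(t/2)/2 = -t/4 := by ring
        rw [← ENNReal.ofReal_mul (by rw [heq]; have := hq1 t ht; linarith)]
        congr 1
        have : -(t/2)/2 = -t/4 := by ring
        rw [this]; ring
      have hmsi : MeasurableSet ({ω | W (i,0) ω ≤ t/2} ∩ {ω | W (i,1) ω ≤ t/2}) :=
        (measurableSet_le (hmeas _) measurable_const).inter
          (measurableSet_le (hmeas _) measurable_const)
      rw [measure_compl hmsi (measure_ne_top μ _), measure_univ, hval,
        ← ENNReal.ofReal_one, ← ENNReal.ofReal_sub _ (by positivity)]
    calc μ {ω | t < f ω}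
        ≤ μ (⋂ i ∈ (Finset.univ : Finset (Fin k)),
            ({ω | W (i,0) ω ≤ t/2} ∩ {ω | W (i,1) ω ≤ t/2})ᶜ) := measure_mono hsub
      _ = ∏ i ∈ (Finset.univ : Finset (Fin k)),
            μ (({ω | W (i,0) ω ≤ t/2} ∩ {ω | W (i,1) ω ≤ t/2})ᶜ) :=
          aux_prod μ k W hmeas hindep (t/2) Finset.univ
      _ = ENNReal.ofReal ((1 - (1 - Real.exp (-t/4))^2)^k) := by
          rw [Finset.prod_congr rfl (fun i _ => hCval i), Finset.prod_const,
            Finset.card_univ, Fintype.card_fin, ← ENNReal.ofReal_pow (hbase_nn t ht)]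
  -- layer cake
  rw [lintegral_eq_lintegral_meas_lt μ hnn hfm.aemeasurable]
  have hsplit : Set.Ioi (0:ℝ) = Set.Ioc 0 4 ∪ Set.Ioi 4 :=
    (Set.Ioc_union_Ioi_eq_Ioi (by norm_num)).symm
  have hdisj : Disjoint (Set.Ioc (0:ℝ) 4) (Set.Ioi 4) := Set.Ioc_disjoint_Ioi le_rfl
  rw [hsplit, lintegral_union measurableSet_Ioi hdisj]
  have pieceA : ∫⁻ t in Set.Ioc (0:ℝ) 4, μ {ω | t < f ω}
      ≤ ENNReal.ofReal (8 * Real.sqrt (Real.pi / k)) := by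
    have hb : (0:ℝ) < k/64 := by positivity
    calc ∫⁻ t in Set.Ioc (0:ℝ) 4, μ {ω | t < f ω}
        ≤ ∫⁻ t in Set.Ioc (0:ℝ) 4, ENNReal.ofReal (Real.exp (-(k/64) * t^2)) := by
          refine setLIntegral_mono (Measurable.ennreal_ofReal (by fun_prop)) (fun t ht => ?_)
          obtain ⟨ht0, ht4⟩ := ht
          refine (hmin_tail t ht0.le).trans (ENNReal.ofReal_le_ofReal ?_)
          set e := Real.exp (-t/4) with he
          have he0 : 0 ≤ e := Real.exp_nonneg _
          have he1 : e ≤ 1 := hq1 t ht0.le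
          have h8 : t/8 ≤ 1 - e := by
            have := aux_exp_half (t/4) (by linarith) (by linarith)
            have heq : -(t/4) = -t/4 := by ring
            rw [heq] at this
            linarith
          have hbase : 1 - (1-e)^2 ≤ Real.exp (-(1-e)^2) := by
            have := Real.one_sub_le_exp_neg ((1-e)^2)
            linarith
          calc (1 - (1-e)^2)^k ≤ (Real.exp (-(1-e)^2))^k :=
                pow_le_pow_left₀ (hbase_nn t ht0.le) hbase k
            _ = Real.exp (k * (-(1-e)^2)) := (Real.exp_nat_mul _ k).symm
            _ ≤ Real.exp (-(k/64) * t^2) := by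
                apply Real.exp_le_exp.2
                have hsq : (t/8)^2 ≤ (1-e)^2 := by nlinarith
                nlinarith [hsq, hkR.le]
      _ ≤ ∫⁻ t in Set.Ioi (0:ℝ), ENNReal.ofReal (Real.exp (-(k/64) * t^2)) :=
          lintegral_mono_set (fun x hx => hx.1)
      _ = ENNReal.ofReal (∫ t in Set.Ioi (0:ℝ), Real.exp (-(k/64) * t^2)) := by
          rw [ofReal_integral_eq_lintegral_ofReal
            ((integrable_exp_neg_mul_sq hb).integrableOn)
            (Filter.Eventually.of_forall fun x => Real.exp_nonneg _)]
      _ ≤ ENNReal.ofReal (8 * Real.sqrt (Real.pi / k)) := by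
          rw [integral_gaussian_Ioi]
          apply ENNReal.ofReal_le_ofReal
          have h1 : Real.pi / ((k:ℝ)/64) = 64 * (Real.pi / k) := by field_simp
          rw [h1, show (64:ℝ) = 8^2 by norm_num, Real.sqrt_mul (by positivity),
            Real.sqrt_sq (by norm_num)]
          have := Real.sqrt_nonneg (Real.pi / (k:ℝ))
          linarith
  have pieceB : ∫⁻ t in Set.Ioi (4:ℝ), μ {ω | t < f ω}
      ≤ ENNReal.ofReal (2 ^ (k + 2) / (k * Real.exp k)) := by
    have hc : (0:ℝ) < k/4 := by positivity
    calc ∫⁻ t in Set.Ioi (4:ℝ), μ {ω | t < f ω}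
        ≤ ∫⁻ t in Set.Ioi (4:ℝ), ENNReal.ofReal (2^k * Real.exp (-((k:ℝ)/4 * t))) := by
          refine setLIntegral_mono (Measurable.ennreal_ofReal (by fun_prop)) (fun t ht => ?_)
          have ht4 : (4:ℝ) < t := ht
          have ht0 : (0:ℝ) ≤ t := by linarith
          refine (hmin_tail t ht0).trans (ENNReal.ofReal_le_ofReal ?_)
          set e := Real.exp (-t/4) with he
          have he0 : 0 ≤ e := Real.exp_nonneg _
          have hbase : 1 - (1-e)^2 ≤ 2*e := by nlinarith
          calc (1 - (1-e)^2)^k ≤ (2*e)^k := pow_le_pow_left₀ (hbase_nn t ht0) hbase k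
            _ = 2^k * Real.exp (-((k:ℝ)/4 * t)) := by
                rw [mul_pow, he, ← Real.exp_nat_mul]
                congr 2
                ring
      _ = ENNReal.ofReal (∫ t in Set.Ioi (4:ℝ), 2^k * Real.exp (-((k:ℝ)/4 * t))) := by
          have h1 : IntegrableOn (fun x : ℝ => 2^k * Real.exp (-((k:ℝ)/4 * x))) (Set.Ioi 4) := by
            have h0 := (exp_neg_integrableOn_Ioi 4 hc).const_mul ((2:ℝ)^k)
            simp only [neg_mul] at h0; exact h0
          rw [ofReal_integral_eq_lintegral_ofReal h1
            (Filter.Eventually.of_forall fun x => by positivity)]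
      _ ≤ ENNReal.ofReal (2 ^ (k + 2) / (k * Real.exp k)) := by
          apply ENNReal.ofReal_le_ofReal
          rw [MeasureTheory.integral_const_mul, aux_exp_tail ((k:ℝ)/4) 4 hc]
          have h4 : (k:ℝ)/4 * 4 = k := by field_simp
          rw [h4, Real.exp_neg]
          have hek : (0:ℝ) < Real.exp k := Real.exp_pos _
          have heq : (2:ℝ)^k * ((Real.exp k)⁻¹ / ((k:ℝ)/4)) = 2^(k+2)/((k:ℝ)*Real.exp k) := by
            rw [pow_add]
            field_simp
            ring
          rw [heq]
  calc (∫⁻ t in Set.Ioc (0:ℝ) 4, μ {ω | t < f ω}) + ∫⁻ t in Set.Ioi (4:ℝ), μ {ω | t < f ω}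
      ≤ ENNReal.ofReal (8 * Real.sqrt (Real.pi / k))
        + ENNReal.ofReal (2 ^ (k + 2) / (k * Real.exp k)) := add_le_add pieceA pieceB
    _ = ENNReal.ofReal (8 * Real.sqrt (Real.pi / k) + 2 ^ (k + 2) / (k * Real.exp k)) :=
        (ENNReal.ofReal_add (by positivity) (by positivity)).symm
end
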